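/- Assume 0 < μ < 1/L_f and 0 < β < 2, and consider the inexact gradient descent iterates: given x⁰, z⁰ ∈ ℝⁿ, for each k ≥ 0 let x^{k+1} be the unique minimizer of x ↦ ⟨∇f(x^k), x⟩ + h(x) + ‖x − z^k‖²/(2μ), let x_{μg}(z^k) be the proximal point of g at z^k, and set z^{k+1} = z^k + β(x^{k+1} − x_{μg}(z^k)). Define ξ^{k+1} = ∇f(x^{k+1}) − ∇f(x^k) − (x^{k+1} − x_{μg}(z^k))/μ, the potential ℱ(x, z) = f(x) + h(x) + ‖x − z‖²/(2μ) − M_{μg}(z), and the constants c₁ = (μ^{-1} − L_f)/2, c₂ = (1/β − 1/2)/μ. Then for every integer K ≥ 1 there exists k̄ ∈ {0, …, K−1} such that ξ^{k̄+1} ∈ ∇f(x^{k̄+1}) + ∂h(x^{k̄+1}) − ∂g(x_{μg}(z^{k̄})) and max{ ‖ξ^{k̄+1}‖, ‖x_{μg}(z^{k̄}) − x^{k̄+1}‖ } ≤ ( L_f + (μ^{-1} + 1)/β ) · ( (ℱ(x⁰, z⁰) − F*) / (min{c₁, c₂} K) )^{1/2}. -/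

import Mathlib

open scoped RealInnerProductSpace

noncomputable section

/-- `ℝⁿ` with the Euclidean norm. -/
abbrev En (n : ℕ) := EuclideanSpace ℝ (Fin n)

/-- `h` is proper: finite somewhere and never `⊥`. -/
def ProperE {n : ℕ} (h : En n → EReal) : Prop :=
  (∃ x, h x ≠ ⊤) ∧ ∀ x, h x ≠ ⊥

/-- Convexity of an extended-real-valued function. -/
def ConvexE {n : ℕ} (h : En n → EReal) : Prop :=
  ∀ x y : En n, ∀ a b : ℝ, 0 ≤ a → 0 ≤ b → a + b = 1 →
    h (a • x + b • y) ≤ (a : EReal) * h x + (b : EReal) * h y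

/-- `Mφ` is the Moreau envelope of `φ` with parameter `μ` and `xφ` the associated
(unique) proximal mapping. -/
def IsMoreau {n : ℕ} (φ : En n → EReal) (μ : ℝ) (Mφ : En n → ℝ) (xφ : En n → En n) : Prop :=
  ∀ z : En n,
    (Mφ z : EReal) = φ (xφ z) + ((‖xφ z - z‖ ^ 2 / (2 * μ) : ℝ) : EReal) ∧
    (∀ x, (Mφ z : EReal) ≤ φ x + ((‖x - z‖ ^ 2 / (2 * μ) : ℝ) : EReal)) ∧
    (∀ x, φ x + ((‖x - z‖ ^ 2 / (2 * μ) : ℝ) : EReal) = (Mφ z : EReal) → x = xφ z)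

/-- Real-valued version, for the convex function `g`. -/
def IsMoreauR {n : ℕ} (g : En n → ℝ) (μ : ℝ) (Mg : En n → ℝ) (xg : En n → En n) : Prop :=
  ∀ z : En n,
    Mg z = g (xg z) + ‖xg z - z‖ ^ 2 / (2 * μ) ∧
    (∀ x, Mg z ≤ g x + ‖x - z‖ ^ 2 / (2 * μ)) ∧
    (∀ x, g x + ‖x - z‖ ^ 2 / (2 * μ) = Mg z → x = xg z)

/-- `ξ ∈ ∂g(x)` for a (finite-valued) convex function `g`. -/
def ConvexSubgradAt {n : ℕ} (g : En n → ℝ) (ξ x : En n) : Prop :=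
  ∀ y, g x + ⟪ξ, y - x⟫ ≤ g y

/-- `ξ ∈ ∂h(x)` for a proper convex extended-real-valued `h`. -/
def ESubgradAt {n : ℕ} (h : En n → EReal) (ξ x : En n) : Prop :=
  ∀ y, h x + ((⟪ξ, y - x⟫ : ℝ) : EReal) ≤ h y

/-- The potential function `ℱ(x,z) = f(x) + h(x) + ‖x−z‖²/(2μ) − M_{μg}(z)`. -/
def potF {n : ℕ} (f : En n → ℝ) (h : En n → EReal) (Mg : En n → ℝ) (μ : ℝ)
    (x z : En n) : EReal :=
  h x + ((f x + ‖x - z‖ ^ 2 / (2 * μ) - Mg z : ℝ) : EReal)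

/- ==================== auxiliary lemmas ==================== -/

lemma quad_id {n : ℕ} (a b : En n) (t : ℝ) :
    ‖a + t • (b - a)‖ ^ 2 = (1 - t) * ‖a‖ ^ 2 + t * ‖b‖ ^ 2 - t * (1 - t) * ‖b - a‖ ^ 2 := by
  have h1 : ‖a + t • (b - a)‖ ^ 2 = ‖a‖ ^ 2 + 2 * (t * ⟪a, b - a⟫) + t ^ 2 * ‖b - a‖ ^ 2 := by
    rw [@norm_add_sq_real, real_inner_smul_right, norm_smul, mul_pow, Real.norm_eq_abs, sq_abs]
  have h2 : ‖b‖ ^ 2 = ‖a‖ ^ 2 + 2 * ⟪a, b - a⟫ + ‖b - a‖ ^ 2 := by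
    have : b = a + (b - a) := by abel
    nth_rewrite 1 [this]
    rw [@norm_add_sq_real]
  linear_combination h1 - t * h2

lemma strong_min_aux {P Q c : ℝ} (hc : 0 ≤ c)
    (H : ∀ t : ℝ, 0 < t → t < 1 → P + (1 - t) * c ≤ Q) : P + c ≤ Q := by
  refine le_of_forall_pos_le_add fun ε hε => ?_
  rcases eq_or_lt_of_le hc with hc0 | hc0
  · have := H (1/2) (by norm_num) (by norm_num)
    nlinarith
  · set t := min (1/2 : ℝ) (ε / c) with ht
    have ht0 : 0 < t := lt_min (by norm_num) (div_pos hε hc0)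
    have ht1 : t < 1 := lt_of_le_of_lt (min_le_left _ _) (by norm_num)
    have h1 := H t ht0 ht1
    have h2 : t * c ≤ ε := by
      have : t ≤ ε / c := min_le_right _ _
      calc t * c ≤ (ε / c) * c := by nlinarith
        _ = ε := by field_simp
    nlinarith

lemma descent_lemma {n : ℕ} (f : En n → ℝ) (f' : En n → En n) (Lf : ℝ) (_hLf : 0 ≤ Lf)
    (hfdiff : ∀ x, HasGradientAt f (f' x) x)
    (hfLip : ∀ x y : En n, ‖f' x - f' y‖ ≤ Lf * ‖x - y‖) (x y : En n) :
    f y ≤ f x + ⟪f' x, y - x⟫ + Lf / 2 * ‖y - x‖ ^ 2 := by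
  set c : ℝ → En n := fun t => x + t • (y - x) with hc
  have hcd : ∀ t : ℝ, HasDerivAt c (y - x) t := by
    intro t
    have : HasDerivAt (fun t : ℝ => t • (y - x)) (y - x) t := by
      simpa using (hasDerivAt_id t).smul_const (y - x)
    exact this.const_add x
  have hφ : ∀ t : ℝ, HasDerivAt (fun t => f (c t)) ⟪f' (c t), y - x⟫ t := by
    intro t
    have := ((hfdiff (c t)).hasFDerivAt.comp_hasDerivAt t (hcd t))
    exact this
  set G : ℝ → ℝ := fun t => f (c t) - t * ⟪f' x, y - x⟫ - Lf / 2 * t ^ 2 * ‖y - x‖ ^ 2 with hG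
  have hGd : ∀ t : ℝ, HasDerivAt G (⟪f' (c t), y - x⟫ - ⟪f' x, y - x⟫ - Lf * t * ‖y - x‖ ^ 2) t := by
    intro t
    have h1 : HasDerivAt (fun t : ℝ => t * ⟪f' x, y - x⟫) ⟪f' x, y - x⟫ t := by
      simpa using (hasDerivAt_id t).mul_const ⟪f' x, y - x⟫
    have h2 : HasDerivAt (fun t : ℝ => Lf / 2 * t ^ 2 * ‖y - x‖ ^ 2) (Lf * t * ‖y - x‖ ^ 2) t := by
      have := ((hasDerivAt_pow 2 t).const_mul (Lf / 2)).mul_const (‖y - x‖ ^ 2)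
      exact this.congr_deriv (by ring)
    exact ((hφ t).sub h1).sub h2
  have key : G 1 ≤ G 0 := by
    have hanti : AntitoneOn G (Set.Icc (0:ℝ) 1) := by
      apply antitoneOn_of_deriv_nonpos (convex_Icc 0 1)
      · exact fun t _ => (hGd t).continuousAt.continuousWithinAt
      · intro t ht
        exact ((hGd t).differentiableAt).differentiableWithinAt
      · intro t ht
        rw [interior_Icc] at ht
        rw [(hGd t).deriv]
        have hcs : ⟪f' (c t) - f' x, y - x⟫ ≤ ‖f' (c t) - f' x‖ * ‖y - x‖ :=
          real_inner_le_norm _ _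
        have hlip := hfLip (c t) x
        have hct : ‖c t - x‖ = t * ‖y - x‖ := by
          simp [hc, norm_smul, abs_of_pos ht.1]
        rw [hct] at hlip
        have := mul_le_mul_of_nonneg_right hlip (norm_nonneg (y - x))
        rw [inner_sub_left] at hcs
        nlinarith [norm_nonneg (y - x), ht.1.le]
    exact hanti (by norm_num) (by norm_num) (by norm_num)
  have hc0 : c 0 = x := by simp [hc]
  have hc1 : c 1 = y := by simp [hc]
  simp only [hG, hc0, hc1] at key
  nlinarith [key]

lemma prox_subgrad {n : ℕ} (g : En n → ℝ) (hg : ConvexOn ℝ Set.univ g) (μ : ℝ) (hμ : 0 < μ)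
    (Mg : En n → ℝ) (xg : En n → En n) (hgprox : IsMoreauR g μ Mg xg) (z' w : En n) :
    g (xg z') + μ⁻¹ * ⟪z' - xg z', w - xg z'⟫ ≤ g w := by
  set u := xg z' with hu
  obtain ⟨heq, hmin, -⟩ := hgprox z'
  have key : g u + ‖u - z'‖ ^ 2 / (2 * μ) + ‖w - u‖ ^ 2 / (2 * μ)
      ≤ g w + ‖w - z'‖ ^ 2 / (2 * μ) := by
    apply strong_min_aux (by positivity)
    intro t ht0 ht1
    have hwt := hmin (u + t • (w - u))
    rw [heq] at hwt
    have hconv : g (u + t • (w - u)) ≤ (1 - t) * g u + t * g w := by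
      have := hg.2 (Set.mem_univ u) (Set.mem_univ w) (by linarith : (0:ℝ) ≤ 1 - t)
        ht0.le (by ring)
      have he : (1 - t) • u + t • w = u + t • (w - u) := by module
      rwa [he] at this
    have hq : ‖u + t • (w - u) - z'‖ ^ 2
        = (1 - t) * ‖u - z'‖ ^ 2 + t * ‖w - z'‖ ^ 2 - t * (1 - t) * ‖w - u‖ ^ 2 := by
      have he : u + t • (w - u) - z' = (u - z') + t • ((w - z') - (u - z')) := by module
      rw [he, quad_id, show w - z' - (u - z') = w - u from by module]
    rw [hq] at hwt
    have h2μ : 0 < 2 * μ := by linarith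
    have hrw : ((1 - t) * ‖u - z'‖ ^ 2 + t * ‖w - z'‖ ^ 2 - t * (1 - t) * ‖w - u‖ ^ 2) / (2 * μ)
        = (1 - t) * (‖u - z'‖ ^ 2 / (2 * μ)) + t * (‖w - z'‖ ^ 2 / (2 * μ))
          - t * (1 - t) * (‖w - u‖ ^ 2 / (2 * μ)) := by ring
    rw [hrw] at hwt
    have comb : g u + ‖u - z'‖ ^ 2 / (2 * μ) ≤ (1 - t) * g u + t * g w +
        ((1 - t) * (‖u - z'‖ ^ 2 / (2 * μ)) + t * (‖w - z'‖ ^ 2 / (2 * μ))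
          - t * (1 - t) * (‖w - u‖ ^ 2 / (2 * μ))) :=
      le_trans hwt (by linarith)
    nlinarith [comb, ht0, ht1]
  have hexp : ‖w - z'‖ ^ 2 = ‖w - u‖ ^ 2 + 2 * ⟪w - u, u - z'⟫ + ‖u - z'‖ ^ 2 := by
    have he : w - z' = (w - u) + (u - z') := by abel
    rw [he, @norm_add_sq_real]
  have hin : ⟪z' - u, w - u⟫ = -⟪w - u, u - z'⟫ := by
    rw [real_inner_comm]
    rw [show z' - u = -(u - z') by abel, inner_neg_right]
  rw [hexp] at key
  rw [hin]
  have h2μ : 0 < 2 * μ := by linarith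
  have hthis : μ⁻¹ * -⟪w - u, u - z'⟫ = -(2 * ⟪w - u, u - z'⟫ / (2 * μ)) := by
    field_simp
  rw [hthis]
  have hsplit : (‖w - u‖ ^ 2 + 2 * ⟪w - u, u - z'⟫ + ‖u - z'‖ ^ 2) / (2 * μ)
      = ‖w - u‖ ^ 2 / (2 * μ) + 2 * ⟪w - u, u - z'⟫ / (2 * μ) + ‖u - z'‖ ^ 2 / (2 * μ) := by
    ring
  rw [hsplit] at key
  linarith [key]

lemma moreau_lb {n : ℕ} (g : En n → ℝ) (hg : ConvexOn ℝ Set.univ g) (μ : ℝ) (hμ : 0 < μ)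
    (Mg : En n → ℝ) (xg : En n → En n) (hgprox : IsMoreauR g μ Mg xg) (z z2 : En n) :
    Mg z + μ⁻¹ * ⟪z - xg z, z2 - z⟫ ≤ Mg z2 := by
  set u := xg z
  set u2 := xg z2
  obtain ⟨heq, -, -⟩ := hgprox z
  obtain ⟨heq2, -, -⟩ := hgprox z2
  have hsub := prox_subgrad g hg μ hμ Mg xg hgprox z u2
  rw [heq, heq2]
  have h0 : (0:ℝ) ≤ ‖(u2 - z2) - (u - z)‖ ^ 2 := sq_nonneg _
  have h1 : ‖(u2 - z2) - (u - z)‖ ^ 2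
      = ‖u2 - z2‖ ^ 2 - 2 * ⟪u2 - z2, u - z⟫ + ‖u - z‖ ^ 2 := norm_sub_sq_real _ _
  have h2 : ⟪z - u, z2 - z⟫ - ⟪z - u, u2 - u⟫ = ⟪u2 - z2, u - z⟫ - ‖u - z‖ ^ 2 := by
    rw [← inner_sub_right]
    have e1 : (z2 - z) - (u2 - u) = -((u2 - z2) - (u - z)) := by abel
    rw [e1, inner_neg_right, inner_sub_right]
    have e2 : ⟪z - u, u2 - z2⟫ = -⟪u2 - z2, u - z⟫ := by
      rw [real_inner_comm, show z - u = -(u - z) by abel, inner_neg_right]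
    rw [e2, show z - u = -(u - z) from by module, inner_neg_left, real_inner_self_eq_norm_sq]
    ring
  have h2μ : 0 < 2 * μ := by linarith
  have hμ' : (0:ℝ) < μ⁻¹ := by positivity
  have key : μ⁻¹ * ⟪z - u, z2 - z⟫ - μ⁻¹ * ⟪z - u, u2 - u⟫
      ≤ ‖u2 - z2‖ ^ 2 / (2 * μ) - ‖u - z‖ ^ 2 / (2 * μ) := by
    rw [← mul_sub, h2]
    have hrw : μ⁻¹ * (⟪u2 - z2, u - z⟫ - ‖u - z‖ ^ 2)
        = (2 * (⟪u2 - z2, u - z⟫ - ‖u - z‖ ^ 2)) / (2 * μ) := by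
      field_simp
    rw [hrw, div_sub_div_same]
    gcongr
    nlinarith [h0, h1]
  linarith [hsub, key]

lemma h_strong_min {n : ℕ} (h : En n → EReal) (hbot : ∀ x, h x ≠ ⊥) (hhconv : ConvexE h)
    (μ : ℝ) (hμ : 0 < μ) (v z xp : En n) (hp : ℝ) (hxp : h xp = (hp : EReal))
    (hmin : ∀ w : En n, ((⟪v, xp⟫ + ‖xp - z‖ ^ 2 / (2 * μ) : ℝ) : EReal) + h xp ≤
      ((⟪v, w⟫ + ‖w - z‖ ^ 2 / (2 * μ) : ℝ) : EReal) + h w)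
    (y : En n) (ry : ℝ) (hy : h y = (ry : EReal)) :
    ⟪v, xp⟫ + ‖xp - z‖ ^ 2 / (2 * μ) + hp + ‖y - xp‖ ^ 2 / (2 * μ)
      ≤ ⟪v, y⟫ + ‖y - z‖ ^ 2 / (2 * μ) + ry := by
  have main : (⟪v, xp⟫ + ‖xp - z‖ ^ 2 / (2 * μ) + hp) + ‖y - xp‖ ^ 2 / (2 * μ)
      ≤ ⟪v, y⟫ + ‖y - z‖ ^ 2 / (2 * μ) + ry := by
    apply strong_min_aux (by positivity)
    intro t ht0 ht1
    set wt := xp + t • (y - xp) with hwt_def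
    have hconv : h wt ≤ (((1 - t) * hp + t * ry : ℝ) : EReal) := by
      have hc := hhconv xp y (1 - t) t (by linarith) ht0.le (by ring)
      rw [hxp, hy, show (1 - t) • xp + t • y = wt from by module] at hc
      calc h wt ≤ ((1 - t : ℝ) : EReal) * (hp : EReal) + ((t : ℝ) : EReal) * (ry : EReal) := hc
        _ = (((1 - t) * hp + t * ry : ℝ) : EReal) := by norm_cast
    have hne_top : h wt ≠ ⊤ := (lt_of_le_of_lt hconv (EReal.coe_lt_top _)).ne
    set rw' := (h wt).toReal with hrw'
    have hwt : h wt = (rw' : EReal) := (EReal.coe_toReal hne_top (hbot wt)).symm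
    have hwtle : rw' ≤ (1 - t) * hp + t * ry := by
      rw [hwt] at hconv
      exact_mod_cast hconv
    have hm := hmin wt
    rw [hxp, hwt] at hm
    have hmr : ⟪v, xp⟫ + ‖xp - z‖ ^ 2 / (2 * μ) + hp ≤
        ⟪v, wt⟫ + ‖wt - z‖ ^ 2 / (2 * μ) + rw' := by exact_mod_cast hm
    have hq : ‖wt - z‖ ^ 2
        = (1 - t) * ‖xp - z‖ ^ 2 + t * ‖y - z‖ ^ 2 - t * (1 - t) * ‖y - xp‖ ^ 2 := by
      have he : wt - z = (xp - z) + t • ((y - z) - (xp - z)) := by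
        rw [hwt_def]; module
      rw [he, quad_id, show y - z - (xp - z) = y - xp from by module]
    have hiwt : ⟪v, wt⟫ = ⟪v, xp⟫ + t * ⟪v, y - xp⟫ := by
      rw [hwt_def, inner_add_right, real_inner_smul_right]
    have hiy : ⟪v, y⟫ = ⟪v, xp⟫ + ⟪v, y - xp⟫ := by
      rw [← inner_add_right, show xp + (y - xp) = y from by module]
    rw [hq, hiwt] at hmr
    have h2μ : (0:ℝ) < 2 * μ := by linarith
    have hrw2 : ((1 - t) * ‖xp - z‖ ^ 2 + t * ‖y - z‖ ^ 2 - t * (1 - t) * ‖y - xp‖ ^ 2) / (2 * μ)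
        = (1 - t) * (‖xp - z‖ ^ 2 / (2 * μ)) + t * (‖y - z‖ ^ 2 / (2 * μ))
          - t * (1 - t) * (‖y - xp‖ ^ 2 / (2 * μ)) := by ring
    rw [hrw2] at hmr
    rw [hiy]
    nlinarith [hmr, hwtle, ht0, ht1]
  linarith [main]

set_option maxHeartbeats 1000000 in
/-- convergence rate of the inexact gradient descent on `F_μ`
(Algorithm 1). -/
theorem stmt16 {n : ℕ} (f : En n → ℝ) (f' : En n → En n) (Lf : ℝ) (hLf : 0 < Lf)
    (hfdiff : ∀ x, HasGradientAt f (f' x) x)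
    (hfLip : ∀ x y : En n, ‖f' x - f' y‖ ≤ Lf * ‖x - y‖)
    (h : En n → EReal) (hhproper : ProperE h) (hhlsc : LowerSemicontinuous h)
    (hhconv : ConvexE h)
    (g : En n → ℝ) (hg : ConvexOn ℝ Set.univ g)
    (μ β : ℝ) (hμ0 : 0 < μ) (hμ1 : μ < 1 / Lf) (hβ0 : 0 < β) (hβ2 : β < 2)
    (Fstar : ℝ)
    (hmin : ∃ xs : En n, ((f xs : ℝ) : EReal) + h xs - ((g xs : ℝ) : EReal) = (Fstar : EReal) ∧
      ∀ x, (Fstar : EReal) ≤ ((f x : ℝ) : EReal) + h x - ((g x : ℝ) : EReal))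
    (Mg : En n → ℝ) (xg : En n → En n) (hgprox : IsMoreauR g μ Mg xg)
    (x z : ℕ → En n)
    (hx : ∀ k : ℕ, ∀ w : En n,
      ((⟪f' (x k), x (k + 1)⟫ + ‖x (k + 1) - z k‖ ^ 2 / (2 * μ) : ℝ) : EReal) + h (x (k + 1)) ≤
        ((⟪f' (x k), w⟫ + ‖w - z k‖ ^ 2 / (2 * μ) : ℝ) : EReal) + h w)
    (hz : ∀ k : ℕ, z (k + 1) = z k + β • (x (k + 1) - xg (z k)))
    (F0 : ℝ) (hF0 : potF f h Mg μ (x 0) (z 0) = (F0 : EReal)) :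
    ∀ K : ℕ, 1 ≤ K → ∃ kb < K,
      (∃ ξh ξg : En n, ESubgradAt h ξh (x (kb + 1)) ∧ ConvexSubgradAt g ξg (xg (z kb)) ∧
        f' (x (kb + 1)) - f' (x kb) - μ⁻¹ • (x (kb + 1) - xg (z kb)) =
          f' (x (kb + 1)) + ξh - ξg) ∧
      max ‖f' (x (kb + 1)) - f' (x kb) - μ⁻¹ • (x (kb + 1) - xg (z kb))‖
          ‖xg (z kb) - x (kb + 1)‖ ≤
        (Lf + (μ⁻¹ + 1) / β) *
          Real.sqrt ((F0 - Fstar) / (min ((μ⁻¹ - Lf) / 2) ((1 / β - 1 / 2) / μ) * K)) := by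
  intro K hK
  have hμinv : Lf < μ⁻¹ := by
    rw [lt_div_iff₀ hLf] at hμ1
    nlinarith [inv_mul_cancel₀ hμ0.ne', hμ0]
  have hc1 : 0 < (μ⁻¹ - Lf) / 2 := by linarith
  have hβhalf : (1:ℝ)/2 < 1/β := by
    rw [div_lt_div_iff₀ (by norm_num) hβ0]
    linarith
  have hc2 : 0 < (1/β - 1/2)/μ := div_pos (by linarith) hμ0
  -- finiteness of h along the iterates
  have hfin : ∀ k : ℕ, ∃ r : ℝ, h (x k) = (r : EReal) := by
    intro k
    cases k with
    | zero =>
      have h0 := hF0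
      simp only [potF] at h0
      have ht : h (x 0) ≠ ⊤ := by
        intro ht
        rw [ht, EReal.top_add_coe] at h0
        exact EReal.top_ne_coe F0 h0
      exact ⟨(h (x 0)).toReal, (EReal.coe_toReal ht (hhproper.2 _)).symm⟩
    | succ k =>
      obtain ⟨w, hw⟩ := hhproper.1
      have hxw := hx k w
      refine ⟨(h (x (k+1))).toReal, (EReal.coe_toReal ?_ (hhproper.2 _)).symm⟩
      intro ht
      rw [ht] at hxw
      rw [show h w = ((h w).toReal : EReal) from (EReal.coe_toReal hw (hhproper.2 w)).symm]
        at hxw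
      simp only [EReal.coe_add_top, top_le_iff] at hxw
      rw [← EReal.coe_add] at hxw
      exact EReal.coe_ne_top _ hxw
  choose hr hhr using hfin
  -- the strong-convexity consequence of the x-update
  have hL1 : ∀ k (y : En n) (ry : ℝ), h y = (ry : EReal) →
      ⟪f' (x k), x (k+1)⟫ + ‖x (k+1) - z k‖ ^ 2 / (2 * μ) + hr (k+1)
        + ‖y - x (k+1)‖ ^ 2 / (2 * μ)
        ≤ ⟪f' (x k), y⟫ + ‖y - z k‖ ^ 2 / (2 * μ) + ry := by
    intro k y ry hy
    exact h_strong_min h hhproper.2 hhconv μ hμ0 (f' (x k)) (z k) (x (k+1)) (hr (k+1))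
      (hhr (k+1)) (hx k) y ry hy
  set Φ : ℕ → ℝ := fun k => f (x k) + hr k + ‖x k - z k‖ ^ 2 / (2 * μ) - Mg (z k) with hΦ
  have hΦ0 : Φ 0 = F0 := by
    have h0 := hF0
    simp only [potF] at h0
    rw [hhr 0, ← EReal.coe_add] at h0
    have := EReal.coe_eq_coe_iff.1 h0
    simp only [hΦ]
    linarith
  set D : ℕ → ℝ := fun k => (μ⁻¹ - Lf)/2 * ‖x (k+1) - x k‖ ^ 2
      + (1/β - 1/2)/μ * β^2 * ‖x (k+1) - xg (z k)‖ ^ 2 with hDdef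
  -- one-step decrease
  have key : ∀ k : ℕ, Φ (k+1) + D k ≤ Φ k := by
    intro k
    simp only [hDdef]
    have hA := hL1 k (x k) (hr k) (hhr k)
    rw [show ‖x k - x (k+1)‖ = ‖x (k+1) - x k‖ from norm_sub_rev _ _] at hA
    have hB := descent_lemma f f' Lf hLf.le hfdiff hfLip (x k) (x (k+1))
    rw [inner_sub_right] at hB
    have hexp : ‖x (k+1) - z (k+1)‖ ^ 2 = ‖x (k+1) - z k‖ ^ 2
        - 2 * (β * ⟪x (k+1) - z k, x (k+1) - xg (z k)⟫)
        + β^2 * ‖x (k+1) - xg (z k)‖ ^ 2 := by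
      rw [hz k, show x (k+1) - (z k + β • (x (k+1) - xg (z k)))
          = (x (k+1) - z k) - β • (x (k+1) - xg (z k)) from by module,
        norm_sub_sq_real, real_inner_smul_right, norm_smul, Real.norm_eq_abs, mul_pow, sq_abs]
    have hM : Mg (z k) + μ⁻¹ * (β * ⟪z k - xg (z k), x (k+1) - xg (z k)⟫) ≤ Mg (z (k+1)) := by
      have := moreau_lb g hg μ hμ0 Mg xg hgprox (z k) (z (k+1))
      rw [hz k, show z k + β • (x (k+1) - xg (z k)) - z k = β • (x (k+1) - xg (z k))
          from by module, real_inner_smul_right] at this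
      rw [hz k]
      exact this
    have hI : ⟪x (k+1) - z k, x (k+1) - xg (z k)⟫ + ⟪z k - xg (z k), x (k+1) - xg (z k)⟫
        = ‖x (k+1) - xg (z k)‖ ^ 2 := by
      rw [← inner_add_left, show (x (k+1) - z k) + (z k - xg (z k)) = x (k+1) - xg (z k)
        from by module, real_inner_self_eq_norm_sq]
    have hI' : μ⁻¹ * (β * ⟪x (k+1) - z k, x (k+1) - xg (z k)⟫)
        + μ⁻¹ * (β * ⟪z k - xg (z k), x (k+1) - xg (z k)⟫)
        = μ⁻¹ * (β * ‖x (k+1) - xg (z k)‖ ^ 2) := by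
      linear_combination (μ⁻¹ * β) * hI
    have hc2β : (1/β - 1/2)/μ * β^2 * ‖x (k+1) - xg (z k)‖ ^ 2
        = (μ⁻¹ * (β * ‖x (k+1) - xg (z k)‖ ^ 2))
          - μ⁻¹ * β^2 * ‖x (k+1) - xg (z k)‖ ^ 2 / 2 := by
      field_simp
    simp only [hΦ]
    rw [hexp, hc2β]
    simp only [div_eq_mul_inv, mul_inv] at hA hB hM hI' ⊢
    linarith [hA, hB, hM, hI']
  -- lower bound on the potential
  have hΦlb : ∀ k : ℕ, Fstar ≤ Φ k := by
    intro k
    obtain ⟨xs, -, hlb⟩ := hmin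
    have h2 := hlb (x k)
    rw [hhr k, ← EReal.coe_add, ← EReal.coe_sub] at h2
    have h2' : Fstar ≤ f (x k) + hr k - g (x k) := by exact_mod_cast h2
    have h3 := (hgprox (z k)).2.1 (x k)
    simp only [hΦ]
    linarith
  -- telescoping
  have tele : ∀ m : ℕ, Φ m + ∑ k ∈ Finset.range m, D k ≤ Φ 0 := by
    intro m
    induction m with
    | zero => simp
    | succ m ih =>
      rw [Finset.sum_range_succ]
      have := key m
      linarith
  have hKpos : (0:ℝ) < (K:ℝ) := by exact_mod_cast Nat.pos_of_ne_zero (by omega)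
  -- pigeonhole
  obtain ⟨kb, hkbK, hD⟩ : ∃ kb < K, D kb ≤ (F0 - Fstar) / K := by
    by_contra hcon
    push_neg at hcon
    have hsum : ∑ k ∈ Finset.range K, D k ≤ F0 - Fstar := by
      have h1 := tele K
      have h2 := hΦlb K
      rw [hΦ0] at h1
      linarith
    have hlt : ∑ k ∈ Finset.range K, ((F0 - Fstar) / K)
        < ∑ k ∈ Finset.range K, D k := by
      apply Finset.sum_lt_sum_of_nonempty (Finset.nonempty_range_iff.2 (by omega))
      intro i hi
      exact hcon i (Finset.mem_range.1 hi)
    rw [Finset.sum_const, Finset.card_range, nsmul_eq_mul] at hlt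
    have : (K:ℝ) * ((F0 - Fstar)/K) = F0 - Fstar := by field_simp
    linarith
  refine ⟨kb, hkbK, ?_, ?_⟩
  · -- subgradient characterization
    refine ⟨-(f' (x kb)) - μ⁻¹ • (x (kb+1) - z kb), μ⁻¹ • (z kb - xg (z kb)), ?_, ?_, by module⟩
    · intro y
      by_cases hy : h y = ⊤
      · rw [hy]; exact le_top
      · have hyr : h y = ((h y).toReal : EReal) :=
          (EReal.coe_toReal hy (hhproper.2 y)).symm
        have hre := hL1 kb y _ hyr
        rw [hhr (kb+1), hyr, ← EReal.coe_add]
        rw [EReal.coe_le_coe_iff]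
        have hiξ : ⟪-(f' (x kb)) - μ⁻¹ • (x (kb+1) - z kb), y - x (kb+1)⟫
            = -⟪f' (x kb), y - x (kb+1)⟫ - μ⁻¹ * ⟪x (kb+1) - z kb, y - x (kb+1)⟫ := by
          rw [inner_sub_left, inner_neg_left, real_inner_smul_left]
        have hnexp : ‖y - z kb‖ ^ 2 = ‖y - x (kb+1)‖ ^ 2
            + 2 * ⟪y - x (kb+1), x (kb+1) - z kb⟫ + ‖x (kb+1) - z kb‖ ^ 2 := by
          rw [show y - z kb = (y - x (kb+1)) + (x (kb+1) - z kb) from by module,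
            @norm_add_sq_real]
        have hiy : ⟪f' (x kb), y⟫ = ⟪f' (x kb), x (kb+1)⟫ + ⟪f' (x kb), y - x (kb+1)⟫ := by
          rw [← inner_add_right, show x (kb+1) + (y - x (kb+1)) = y from by module]
        have hcomm : ⟪x (kb+1) - z kb, y - x (kb+1)⟫ = ⟪y - x (kb+1), x (kb+1) - z kb⟫ :=
          real_inner_comm _ _
        rw [hnexp, hiy] at hre
        rw [hiξ, hcomm]
        simp only [div_eq_mul_inv, mul_inv] at hre ⊢
        linarith [hre]
    · intro w
      have := prox_subgrad g hg μ hμ0 Mg xg hgprox (z kb) w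
      rwa [real_inner_smul_left]
  · -- the quantitative bound
    set cm := min ((μ⁻¹ - Lf)/2) ((1/β - 1/2)/μ) with hcm
    have hcmpos : 0 < cm := lt_min hc1 hc2
    set S := (F0 - Fstar) / (cm * K) with hS
    have hterm1 : 0 ≤ (μ⁻¹ - Lf)/2 * ‖x (kb+1) - x kb‖ ^ 2 := by positivity
    have hterm2 : 0 ≤ (1/β - 1/2)/μ * β^2 * ‖x (kb+1) - xg (z kb)‖ ^ 2 := by
      have : (0:ℝ) ≤ (1/β - 1/2)/μ := hc2.le
      positivity
    have hSalt : S = ((F0 - Fstar)/K) / cm := by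
      rw [hS, div_div, mul_comm]
    simp only [hDdef] at hD
    have hd2 : ‖x (kb+1) - x kb‖ ^ 2 ≤ S := by
      rw [hSalt, le_div_iff₀ hcmpos]
      have h1 : cm ≤ (μ⁻¹ - Lf)/2 := min_le_left _ _
      have h2 : cm * ‖x (kb+1) - x kb‖ ^ 2 ≤ (μ⁻¹ - Lf)/2 * ‖x (kb+1) - x kb‖ ^ 2 :=
        mul_le_mul_of_nonneg_right h1 (sq_nonneg _)
      linarith [hD, hterm2, h2]
    have he2 : β^2 * ‖x (kb+1) - xg (z kb)‖ ^ 2 ≤ S := by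
      rw [hSalt, le_div_iff₀ hcmpos]
      have h1 : cm ≤ (1/β - 1/2)/μ := min_le_right _ _
      have h2 : cm * (β^2 * ‖x (kb+1) - xg (z kb)‖ ^ 2)
          ≤ (1/β - 1/2)/μ * (β^2 * ‖x (kb+1) - xg (z kb)‖ ^ 2) :=
        mul_le_mul_of_nonneg_right h1 (by positivity)
      have h3 : (1/β - 1/2)/μ * (β^2 * ‖x (kb+1) - xg (z kb)‖ ^ 2)
          = (1/β - 1/2)/μ * β^2 * ‖x (kb+1) - xg (z kb)‖ ^ 2 := by ring
      linarith [hD, hterm1, h2]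
    have hd : ‖x (kb+1) - x kb‖ ≤ Real.sqrt S := by
      rw [show ‖x (kb+1) - x kb‖ = Real.sqrt (‖x (kb+1) - x kb‖ ^ 2)
        from (Real.sqrt_sq (norm_nonneg _)).symm]
      exact Real.sqrt_le_sqrt hd2
    have hβe : β * ‖x (kb+1) - xg (z kb)‖ ≤ Real.sqrt S := by
      rw [show β * ‖x (kb+1) - xg (z kb)‖
          = Real.sqrt ((β * ‖x (kb+1) - xg (z kb)‖) ^ 2) from
        (Real.sqrt_sq (by positivity)).symm]
      apply Real.sqrt_le_sqrt
      calc (β * ‖x (kb+1) - xg (z kb)‖) ^ 2 = β^2 * ‖x (kb+1) - xg (z kb)‖ ^ 2 := by ring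
        _ ≤ S := he2
    have he : ‖x (kb+1) - xg (z kb)‖ ≤ Real.sqrt S / β := by
      rw [le_div_iff₀ hβ0]
      linarith [hβe]
    have hξnorm : ‖f' (x (kb+1)) - f' (x kb) - μ⁻¹ • (x (kb+1) - xg (z kb))‖
        ≤ Lf * ‖x (kb+1) - x kb‖ + μ⁻¹ * ‖x (kb+1) - xg (z kb)‖ := by
      calc ‖f' (x (kb+1)) - f' (x kb) - μ⁻¹ • (x (kb+1) - xg (z kb))‖
          ≤ ‖f' (x (kb+1)) - f' (x kb)‖ + ‖μ⁻¹ • (x (kb+1) - xg (z kb))‖ :=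
            norm_sub_le _ _
        _ ≤ Lf * ‖x (kb+1) - x kb‖ + μ⁻¹ * ‖x (kb+1) - xg (z kb)‖ := by
            have h1 := hfLip (x (kb+1)) (x kb)
            have h2 : ‖μ⁻¹ • (x (kb+1) - xg (z kb))‖ = μ⁻¹ * ‖x (kb+1) - xg (z kb)‖ := by
              rw [norm_smul, Real.norm_eq_abs, abs_of_pos (by positivity)]
            linarith
    have hs0 : 0 ≤ Real.sqrt S := Real.sqrt_nonneg _
    have hβinv : (0:ℝ) < β⁻¹ := by positivity
    have hμβs : 0 ≤ μ⁻¹ * β⁻¹ * Real.sqrt S := by positivity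
    have hβs : 0 ≤ β⁻¹ * Real.sqrt S := by positivity
    apply max_le
    · calc ‖f' (x (kb+1)) - f' (x kb) - μ⁻¹ • (x (kb+1) - xg (z kb))‖
          ≤ Lf * ‖x (kb+1) - x kb‖ + μ⁻¹ * ‖x (kb+1) - xg (z kb)‖ := hξnorm
        _ ≤ Lf * Real.sqrt S + μ⁻¹ * (Real.sqrt S / β) := by
            have hμi : (0:ℝ) < μ⁻¹ := by positivity
            nlinarith [hd, he, hLf, hμi]
        _ ≤ (Lf + (μ⁻¹ + 1) / β) * Real.sqrt S := by
            simp only [div_eq_mul_inv]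
            nlinarith [hβs]
    · calc ‖xg (z kb) - x (kb+1)‖ = ‖x (kb+1) - xg (z kb)‖ := norm_sub_rev _ _
        _ ≤ Real.sqrt S / β := he
        _ ≤ (Lf + (μ⁻¹ + 1) / β) * Real.sqrt S := by
            simp only [div_eq_mul_inv]
            have hLfs : 0 ≤ Lf * Real.sqrt S := by positivity
            nlinarith [hμβs, hβs, hLfs]
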